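/- Let F be a forest on a finite vertex set V and let F' be a graph obtained from F by a 2-switch such that F' is also a forest. Then the difference of the ranks over ℝ of the adjacency matrices of F' and F is 0, 2, or −2; equivalently, |rank(F') − rank(F)| ∈ {0, 2}, where rank denotes the rank of the adjacency matrix over the real numbers. -/

import Mathlib

open SimpleGraph

/-- Four pairwise distinct vertices `a,b,c,d` with `ab, cd ∈ E(G)` and `ac, bd ∉ E(G)`:
the condition under which the 2-switch of `G` at `(a,b;c,d)` is performed. -/
def Switchable {V : Type*} (G : SimpleGraph V) (a b c d : V) : Prop :=
  a ≠ b ∧ a ≠ c ∧ a ≠ d ∧ b ≠ c ∧ b ≠ d ∧ c ≠ d ∧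
    G.Adj a b ∧ G.Adj c d ∧ ¬ G.Adj a c ∧ ¬ G.Adj b d

/-- The 2-switch of `G` at `(a,b;c,d)`: the graph on `V` with edge set
`(E(G) \ {ab, cd}) ∪ {ac, bd}`. -/
def twoSwitch {V : Type*} (G : SimpleGraph V) (a b c d : V) : SimpleGraph V :=
  SimpleGraph.fromEdgeSet ((G.edgeSet \ {s(a, b), s(c, d)}) ∪ {s(a, c), s(b, d)})

/-- `G'` is obtained from `G` by a 2-switch. -/
def ObtainedByTwoSwitch {V : Type*} (G G' : SimpleGraph V) : Prop :=
  ∃ a b c d : V, Switchable G a b c d ∧ G' = twoSwitch G a b c d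

/-- The rank of a graph: the rank of its adjacency matrix over `ℝ`. -/
noncomputable def graphRank {V : Type*} [Fintype V] [DecidableEq V]
    (G : SimpleGraph V) : ℕ :=
  haveI := Classical.decRel G.Adj
  (G.adjMatrix ℝ).rank

/-! ### Auxiliary lemmas -/

section Aux

open Matrix Walk

/-- Subadditivity of matrix rank. -/
lemma aux_rank_add_le {V : Type*} [Fintype V] (A B : Matrix V V ℝ) :
    (A + B).rank ≤ A.rank + B.rank := by
  classical
  have h : LinearMap.range (A + B).mulVecLin ≤
      LinearMap.range A.mulVecLin ⊔ LinearMap.range B.mulVecLin := by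
    rintro x ⟨y, rfl⟩
    exact Submodule.mem_sup.2 ⟨A.mulVecLin y, ⟨y, rfl⟩, B.mulVecLin y, ⟨y, rfl⟩, by
      simp [Matrix.add_mulVec]⟩
  calc (A + B).rank
      ≤ Module.finrank ℝ ↥(LinearMap.range A.mulVecLin ⊔ LinearMap.range B.mulVecLin) :=
        Submodule.finrank_mono h
    _ ≤ A.rank + B.rank := Submodule.finrank_add_le_finrank_add_finrank _ _

/-- Outer products have rank at most one. -/
lemma aux_rank_vecMulVec_le {V : Type*} [Fintype V] (w v : V → ℝ) :
    (vecMulVec w v).rank ≤ 1 := by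
  rw [Matrix.vecMulVec_eq (Fin 1)]
  exact (Matrix.rank_mul_le_right _ _).trans
    (by simpa using Matrix.rank_le_card_height (Matrix.replicateRow (Fin 1) v))

lemma aux_rank_sym_outer_le {V : Type*} [Fintype V] (p q : V → ℝ) :
    (vecMulVec p q + vecMulVec q p).rank ≤ 2 := by
  refine (aux_rank_add_le _ _).trans ?_
  have h1 := aux_rank_vecMulVec_le p q
  have h2 := aux_rank_vecMulVec_le q p
  omega

/-- An equivalence between the product of submodules and submodule of the product. -/
def auxProdEquiv {M N : Type*} [AddCommGroup M] [AddCommGroup N] [Module ℝ M] [Module ℝ N]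
    (p : Submodule ℝ M) (q : Submodule ℝ N) : (p.prod q) ≃ₗ[ℝ] p × q where
  toFun x := (⟨x.1.1, x.2.1⟩, ⟨x.1.2, x.2.2⟩)
  invFun x := ⟨(x.1.1, x.2.1), ⟨x.1.2, x.2.2⟩⟩
  map_add' _ _ := rfl
  map_smul' _ _ := rfl
  left_inv _ := rfl
  right_inv _ := rfl

lemma aux_finrank_prod_submodule {M N : Type*} [AddCommGroup M] [AddCommGroup N] [Module ℝ M]
    [Module ℝ N] (p : Submodule ℝ M) (q : Submodule ℝ N)
    [FiniteDimensional ℝ p] [FiniteDimensional ℝ q] :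
    Module.finrank ℝ (p.prod q) = Module.finrank ℝ p + Module.finrank ℝ q := by
  rw [(auxProdEquiv p q).finrank_eq, Module.finrank_prod]

/-- The rank of an antidiagonal block matrix is the sum of the ranks of the blocks. -/
lemma aux_rank_fromBlocks_antidiag {m n : Type*} [Fintype m] [Fintype n] [DecidableEq m]
    [DecidableEq n] (B : Matrix m n ℝ) (C : Matrix n m ℝ) :
    (fromBlocks 0 B C 0).rank = B.rank + C.rank := by
  let e : ((m ⊕ n) → ℝ) ≃ₗ[ℝ] (m → ℝ) × (n → ℝ) := LinearEquiv.sumArrowLequivProdArrow m n ℝ ℝ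
  have key : Submodule.map (e : ((m ⊕ n) → ℝ) →ₗ[ℝ] (m → ℝ) × (n → ℝ))
        (LinearMap.range (fromBlocks 0 B C 0).mulVecLin) =
      (LinearMap.range B.mulVecLin).prod (LinearMap.range C.mulVecLin) := by
    apply le_antisymm
    · rintro x ⟨y, ⟨z, rfl⟩, rfl⟩
      refine ⟨⟨z ∘ Sum.inr, ?_⟩, ⟨z ∘ Sum.inl, ?_⟩⟩ <;>
        simp [e, mulVecLin_apply, fromBlocks_mulVec, LinearEquiv.sumArrowLequivProdArrow] <;> rfl
    · rintro ⟨x, y⟩ ⟨⟨zx, hx⟩, ⟨zy, hy⟩⟩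
      refine ⟨Sum.elim x y, ⟨Sum.elim zy zx, ?_⟩, rfl⟩
      simp only [mulVecLin_apply] at hx hy ⊢
      rw [fromBlocks_mulVec]
      ext i
      cases i <;> simp [e, hx, hy, LinearEquiv.sumArrowLequivProdArrow]
  have h1 := (LinearEquiv.finrank_map_eq e (LinearMap.range (fromBlocks 0 B C 0).mulVecLin)).symm
  rw [Matrix.rank, h1, key, aux_finrank_prod_submodule]
  rfl

/-- A symmetric matrix admitting a proper 2-coloring of its support has even rank. -/
lemma aux_even_rank_of_coloring {V : Type*} [Fintype V] [DecidableEq V] (A : Matrix V V ℝ)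
    (hsym : Aᵀ = A) (P : V → Prop) [DecidablePred P]
    (hcol : ∀ i j, (P i ↔ P j) → A i j = 0) : Even A.rank := by
  let e : {x // P x} ⊕ {x // ¬P x} ≃ V := Equiv.sumCompl P
  let B : Matrix {x // P x} {x // ¬P x} ℝ := fun i j => A i.1 j.1
  have hM : A.submatrix e e = fromBlocks 0 B Bᵀ 0 := by
    ext i j
    cases i with
    | inl i =>
      cases j with
      | inl j =>
        simp only [submatrix_apply, fromBlocks_apply₁₁]
        simpa [e, B] using hcol i.1 j.1 (by simp [i.2, j.2])
      | inr j =>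
        simp only [submatrix_apply, fromBlocks_apply₁₂]
        simp [e, B]
    | inr i =>
      cases j with
      | inl j =>
        simp only [submatrix_apply, fromBlocks_apply₂₁, transpose_apply]
        have := congrFun (congrFun hsym i.1) j.1
        simpa [e, B] using this.symm
      | inr j =>
        simp only [submatrix_apply, fromBlocks_apply₂₂]
        simpa [e, B] using hcol i.1 j.1 (by simp [i.2, j.2])
  have h2 : A.rank = B.rank + Bᵀ.rank := by
    rw [← Matrix.rank_submatrix A e e, hM, aux_rank_fromBlocks_antidiag]
  rw [h2, Matrix.rank_transpose]
  exact Even.add_self _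

/-- Every closed walk in an acyclic graph has even length. -/
lemma aux_even_closed {V : Type*} {G : SimpleGraph V} (hG : G.IsAcyclic) :
    ∀ n : ℕ, ∀ {u : V} (w : G.Walk u u), w.length ≤ n → Even w.length := by
  classical
  intro n
  induction n using Nat.strong_induction_on with
  | _ n IH =>
    intro u w hw
    cases w with
    | nil => simp
    | @cons _ v _ h p =>
      by_cases hp : p.support.Nodup
      · have hpath : p.IsPath := IsPath.mk' hp
        have := hG.path_unique ⟨p, hpath⟩ (Path.singleton h.symm)
        have hlen : p.length = 1 := by
          have := congrArg (fun q : G.Path v u => (q : G.Walk v u).length) this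
          simpa [Path.singleton] using this
        simp [Walk.length_cons, hlen]
      · obtain ⟨x, hdup⟩ := List.exists_duplicate_iff_not_nodup.2 hp
        have hcount : 2 ≤ p.support.count x := List.duplicate_iff_two_le_count.1 hdup
        have hx : x ∈ p.support := hdup.mem
        set q1 := p.takeUntil x hx with hq1
        set q2 := p.dropUntil x hx with hq2
        have hspec : q1.append q2 = p := p.take_spec hx
        have e1 : q1.length + q2.length = p.length := by
          have h' := congrArg Walk.length hspec
          rw [Walk.length_append] at h'
          exact h'
        have hcount1 : q1.support.count x = 1 := p.count_support_takeUntil_eq_one hx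
        have hx2 : x ∈ q2.support.tail := by
          have hsupp : p.support = q1.support ++ q2.support.tail := by
            rw [← hspec, Walk.support_append]
          by_contra hmem
          have : p.support.count x = 1 := by
            rw [hsupp, List.count_append, hcount1, List.count_eq_zero_of_not_mem hmem]
          omega
        cases hq2' : q2 with
        | nil =>
          rw [hq2'] at hx2; simp at hx2
        | @cons _ y _ h2 q3 =>
          rw [hq2'] at hx2
          simp only [Walk.support_cons, List.tail_cons] at hx2
          have e2 : (q3.takeUntil x hx2).length + (q3.dropUntil x hx2).length = q3.length := by
            have h' := congrArg Walk.length (q3.take_spec hx2)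
            rw [Walk.length_append] at h'
            exact h'
          have hq2len : q2.length = q3.length + 1 := by rw [hq2']; simp
          set c : G.Walk x x := Walk.cons h2 (q3.takeUntil x hx2) with hc
          set rem : G.Walk u u := Walk.cons h (q1.append (q3.dropUntil x hx2)) with hrem
          have hclen : c.length = (q3.takeUntil x hx2).length + 1 := by simp [hc]
          have hremlen : rem.length = q1.length + (q3.dropUntil x hx2).length + 1 := by
            simp [hrem, Walk.length_append]
          have hwlen : (Walk.cons h p).length = p.length + 1 := by simp
          have hn1 : c.length < n := by omega
          have hn2 : rem.length < n := by omega
          have ec := IH c.length hn1 c le_rfl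
          have er := IH rem.length hn2 rem le_rfl
          have : (Walk.cons h p).length = c.length + rem.length := by omega
          rw [this]
          exact ec.add er

/-- An acyclic graph has a proper 2-coloring. -/
lemma aux_exists_coloring {V : Type*} (G : SimpleGraph V) (hG : G.IsAcyclic) :
    ∃ P : V → Prop, ∀ u v, G.Adj u v → ¬(P u ↔ P v) := by
  classical
  have hreach : ∀ x : V, G.Reachable ((G.connectedComponentMk x).out) x := by
    intro x
    exact ConnectedComponent.exact (Quot.out_eq _)
  refine ⟨fun x => Odd ((hreach x).some.length), ?_⟩
  intro u v h hiff
  have hcomp : (G.connectedComponentMk v).out = (G.connectedComponentMk u).out := by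
    rw [ConnectedComponent.sound h.reachable]
  let wu := (hreach u).some
  let wv := (hreach v).some
  let wv' : G.Walk ((G.connectedComponentMk u).out) v := wv.copy hcomp rfl
  have hiff' : Odd wu.length ↔ Odd wv.length := hiff
  have hlenv : wv'.length = wv.length := Walk.length_copy _ _ _
  have hclosed : Even (wu.append ((Walk.cons h Walk.nil).append wv'.reverse)).length :=
    aux_even_closed hG _ _ le_rfl
  rw [Walk.length_append, Walk.length_append, Walk.length_reverse] at hclosed
  simp only [Walk.length_cons, Walk.length_nil] at hclosed
  rw [Nat.even_iff] at hclosed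
  rw [Nat.odd_iff, Nat.odd_iff] at hiff'
  rw [hlenv] at hclosed
  omega

/-- An acyclic graph has even adjacency rank. -/
lemma aux_even_graphRank {V : Type*} [Fintype V] [DecidableEq V] {G : SimpleGraph V}
    (hG : G.IsAcyclic) : Even (graphRank G) := by
  classical
  obtain ⟨P, hP⟩ := aux_exists_coloring G hG
  letI := Classical.decRel G.Adj
  have : graphRank G = (G.adjMatrix ℝ).rank := rfl
  rw [this]
  refine aux_even_rank_of_coloring _ ?_ P ?_
  · ext i j
    simp [Matrix.transpose_apply, SimpleGraph.adjMatrix_apply, adj_comm]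
  · intro i j hij
    simp only [SimpleGraph.adjMatrix_apply, ite_eq_right_iff, one_ne_zero]
    intro hA
    exact hP i j hA hij

/-- The adjacency matrix of a 2-switch differs from the original by a symmetric
rank-two perturbation. -/
lemma aux_twoSwitch_adjMatrix {V : Type*} [Fintype V] [DecidableEq V] (G : SimpleGraph V)
    (a b c d : V) (hS : Switchable G a b c d)
    [inst1 : DecidableRel G.Adj] [inst2 : DecidableRel (twoSwitch G a b c d).Adj] :
    (twoSwitch G a b c d).adjMatrix ℝ = G.adjMatrix ℝ +
      (vecMulVec (fun x => if x = a then (1:ℝ) else if x = d then -1 else 0)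
          (fun x => if x = c then (1:ℝ) else if x = b then -1 else 0) +
        vecMulVec (fun x => if x = c then (1:ℝ) else if x = b then -1 else 0)
          (fun x => if x = a then (1:ℝ) else if x = d then -1 else 0)) := by
  obtain ⟨hab, hac, had, hbc, hbd, hcd, Gab, Gcd, nGac, nGbd⟩ := hS
  have Gba := Gab.symm
  have Gdc := Gcd.symm
  have nGca : ¬G.Adj c a := fun hh => nGac hh.symm
  have nGdb : ¬G.Adj d b := fun hh => nGbd hh.symm
  have hba := hab.symm
  have hca := hac.symm
  have hda := had.symm
  have hcb := hbc.symm
  have hdb := hbd.symm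
  have hdc := hcd.symm
  set p : V → ℝ := fun x => if x = a then (1:ℝ) else if x = d then -1 else 0 with hp
  set q : V → ℝ := fun x => if x = c then (1:ℝ) else if x = b then -1 else 0 with hq
  have hadj : ∀ i j, (twoSwitch G a b c d).Adj i j ↔
      (((G.Adj i j ∧ ¬s(i,j) = s(a,b) ∧ ¬s(i,j) = s(c,d)) ∨ (s(i,j) = s(a,c) ∨ s(i,j) = s(b,d)))
        ∧ i ≠ j) := by
    intro i j
    rw [twoSwitch, fromEdgeSet_adj]
    simp only [Set.mem_union, Set.mem_diff, Set.mem_insert_iff, Set.mem_singleton_iff,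
      SimpleGraph.mem_edgeSet]
    tauto
  have key : ∀ i j : V, ¬s(i,j) = s(a,b) → ¬s(i,j) = s(c,d) → ¬s(i,j) = s(a,c) →
      ¬s(i,j) = s(b,d) → p i * q j = 0 := by
    intro i j h1 h2 h3 h4
    by_cases hia : i = a
    · subst hia
      have hjc : j ≠ c := fun hh => h3 (by rw [hh])
      have hjb : j ≠ b := fun hh => h1 (by rw [hh])
      simp [hq, hjc, hjb]
    · by_cases hid : i = d
      · subst hid
        have hjc : j ≠ c := fun hh => h2 (by rw [hh, Sym2.eq_swap])
        have hjb : j ≠ b := fun hh => h4 (by rw [hh, Sym2.eq_swap])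
        simp [hq, hjc, hjb]
      · simp [hp, hia, hid]
  ext i j
  simp only [adjMatrix_apply, Matrix.add_apply, vecMulVec_apply]
  by_cases h1 : s(i,j) = s(a,b)
  · rw [Sym2.eq_iff] at h1
    have hfalse : ¬ (twoSwitch G a b c d).Adj i j := by
      rw [hadj]
      rintro ⟨(⟨_, hn, _⟩ | (hh | hh)), _⟩
      · exact hn (by rw [Sym2.eq_iff]; tauto)
      · rw [Sym2.eq_iff] at hh
        rcases h1 with ⟨rfl, rfl⟩ | ⟨rfl, rfl⟩ <;> rcases hh with ⟨h', h''⟩ | ⟨h', h''⟩ <;>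
          first | exact hbc (h''.symm.trans ‹_›).symm | tauto
      · rw [Sym2.eq_iff] at hh
        rcases h1 with ⟨rfl, rfl⟩ | ⟨rfl, rfl⟩ <;> rcases hh with ⟨h', h''⟩ | ⟨h', h''⟩ <;> tauto
    rw [if_neg hfalse]
    rcases h1 with ⟨rfl, rfl⟩ | ⟨rfl, rfl⟩ <;>
      simp [hp, hq, Gab, Gba, Gcd, Gdc, nGac, nGca, nGbd, nGdb, hab, hba, hac, hca, had, hda,
        hbc, hcb, hbd, hdb, hcd, hdc]
  · by_cases h2 : s(i,j) = s(c,d)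
    · rw [Sym2.eq_iff] at h2
      have hfalse : ¬ (twoSwitch G a b c d).Adj i j := by
        rw [hadj]
        rintro ⟨(⟨_, _, hn⟩ | (hh | hh)), _⟩
        · exact hn (by rw [Sym2.eq_iff]; tauto)
        · rw [Sym2.eq_iff] at hh
          rcases h2 with ⟨rfl, rfl⟩ | ⟨rfl, rfl⟩ <;> rcases hh with ⟨h', h''⟩ | ⟨h', h''⟩ <;> tauto
        · rw [Sym2.eq_iff] at hh
          rcases h2 with ⟨rfl, rfl⟩ | ⟨rfl, rfl⟩ <;> rcases hh with ⟨h', h''⟩ | ⟨h', h''⟩ <;> tauto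
      rw [if_neg hfalse]
      rcases h2 with ⟨rfl, rfl⟩ | ⟨rfl, rfl⟩ <;>
        simp [hp, hq, Gab, Gba, Gcd, Gdc, nGac, nGca, nGbd, nGdb, hab, hba, hac, hca, had, hda,
          hbc, hcb, hbd, hdb, hcd, hdc]
    · by_cases h3 : s(i,j) = s(a,c)
      · have htrue : (twoSwitch G a b c d).Adj i j := by
          rw [hadj]
          refine ⟨Or.inr (Or.inl h3), ?_⟩
          rw [Sym2.eq_iff] at h3
          rcases h3 with ⟨rfl, rfl⟩ | ⟨rfl, rfl⟩
          · exact hac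
          · exact hca
        rw [if_pos htrue]
        rw [Sym2.eq_iff] at h3
        rcases h3 with ⟨rfl, rfl⟩ | ⟨rfl, rfl⟩ <;>
          simp [hp, hq, Gab, Gba, Gcd, Gdc, nGac, nGca, nGbd, nGdb, hab, hba, hac, hca, had, hda,
            hbc, hcb, hbd, hdb, hcd, hdc]
      · by_cases h4 : s(i,j) = s(b,d)
        · have htrue : (twoSwitch G a b c d).Adj i j := by
            rw [hadj]
            refine ⟨Or.inr (Or.inr h4), ?_⟩
            rw [Sym2.eq_iff] at h4
            rcases h4 with ⟨rfl, rfl⟩ | ⟨rfl, rfl⟩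
            · exact hbd
            · exact hdb
          rw [if_pos htrue]
          rw [Sym2.eq_iff] at h4
          rcases h4 with ⟨rfl, rfl⟩ | ⟨rfl, rfl⟩ <;>
            simp [hp, hq, Gab, Gba, Gcd, Gdc, nGac, nGca, nGbd, nGdb, hab, hba, hac, hca, had,
              hda, hbc, hcb, hbd, hdb, hcd, hdc]
        · have hsame : (twoSwitch G a b c d).Adj i j ↔ G.Adj i j := by
            rw [hadj]
            constructor
            · rintro ⟨(⟨hA, _, _⟩ | (hh | hh)), _⟩
              · exact hA
              · exact absurd hh h3
              · exact absurd hh h4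
            · intro hA
              exact ⟨Or.inl ⟨hA, h1, h2⟩, hA.ne⟩
          have hz1 : p i * q j = 0 := key i j h1 h2 h3 h4
          have hz2 : q i * p j = 0 := by
            have := key j i (fun hh => h1 (by rwa [Sym2.eq_swap] at hh))
              (fun hh => h2 (by rwa [Sym2.eq_swap] at hh))
              (fun hh => h3 (by rwa [Sym2.eq_swap] at hh))
              (fun hh => h4 (by rwa [Sym2.eq_swap] at hh))
            linarith [this]
          rw [hz1, hz2]
          by_cases hA : G.Adj i j
          · rw [if_pos (hsame.2 hA), if_pos hA]; ring
          · rw [if_neg (fun hh => hA (hsame.1 hh)), if_neg hA]; ring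

end Aux

/-- an f-switch changes the rank of a forest by `0`, `2`, or `-2`. -/
theorem stmt_13 {V : Type*} [Fintype V] [DecidableEq V] (F F' : SimpleGraph V)
    (hF : F.IsAcyclic) (hF' : F'.IsAcyclic) (h : ObtainedByTwoSwitch F F') :
    (graphRank F' : ℤ) - (graphRank F : ℤ) = 0 ∨
    (graphRank F' : ℤ) - (graphRank F : ℤ) = 2 ∨
    (graphRank F' : ℤ) - (graphRank F : ℤ) = -2 := by
  classical
  obtain ⟨a, b, c, d, hS, rfl⟩ := h
  letI i1 := Classical.decRel F.Adj
  letI i2 := Classical.decRel (twoSwitch F a b c d).Adj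
  set p : V → ℝ := fun x => if x = a then (1:ℝ) else if x = d then -1 else 0 with hp
  set q : V → ℝ := fun x => if x = c then (1:ℝ) else if x = b then -1 else 0 with hq
  have hkey : (twoSwitch F a b c d).adjMatrix ℝ = F.adjMatrix ℝ +
      (Matrix.vecMulVec p q + Matrix.vecMulVec q p) := aux_twoSwitch_adjMatrix F a b c d hS
  have hr' : graphRank (twoSwitch F a b c d) = ((twoSwitch F a b c d).adjMatrix ℝ).rank := rfl
  have hr : graphRank F = (F.adjMatrix ℝ).rank := rfl
  have hub : graphRank (twoSwitch F a b c d) ≤ graphRank F + 2 := by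
    rw [hr', hr, hkey]
    have := aux_rank_add_le (F.adjMatrix ℝ) (Matrix.vecMulVec p q + Matrix.vecMulVec q p)
    have h2 := aux_rank_sym_outer_le p q
    omega
  have hlb : graphRank F ≤ graphRank (twoSwitch F a b c d) + 2 := by
    rw [hr', hr]
    have hback : F.adjMatrix ℝ = (twoSwitch F a b c d).adjMatrix ℝ +
        (Matrix.vecMulVec (-p) q + Matrix.vecMulVec q (-p)) := by
      rw [hkey]
      ext i j
      simp [Matrix.vecMulVec_apply]
      ring
    rw [hback]
    have := aux_rank_add_le ((twoSwitch F a b c d).adjMatrix ℝ)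
      (Matrix.vecMulVec (-p) q + Matrix.vecMulVec q (-p))
    have h2 := aux_rank_sym_outer_le (-p) q
    omega
  obtain ⟨k, hk⟩ := aux_even_graphRank hF
  obtain ⟨k', hk'⟩ := aux_even_graphRank hF'
  rw [hk'] at hub hlb ⊢
  rw [hk] at hub hlb ⊢
  omega
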